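/- Let f be three times continuously differentiable, x* with f'(x*) = 0, f''(x*) > 0. Define ψ_k(x) = x − g_k(x) with g_k from the backward recursion. Then for the varying-step iteration x_{k+1} = x_k − g_k(x_k) (Algorithm 1), for any ε > 0 there is a neighborhood of x* where |x_{k+1} − x*| ≤ (ψ_k'(x*) + ε)|x_k − x*|, and hence |x_{k+1} − x*| ≤ ∏_{i=0}^{k}(ψ_i'(x*) + ε) · |x_0 − x*| as long as all iterates remain in that neighborhood. -/

import Mathlib

open Finset

/-- Uniform δ over finitely many indices. -/
private lemma aux_uniform_delta {xs : ℝ} (Q : ℕ → ℝ → Prop) :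
    ∀ m : ℕ, (∀ k ≤ m, ∃ δ > 0, ∀ y : ℝ, |y - xs| < δ → Q k y) →
      ∃ δ > 0, ∀ k ≤ m, ∀ y : ℝ, |y - xs| < δ → Q k y := by
  intro m
  induction m with
  | zero =>
    intro h
    obtain ⟨δ, hδ, hQ⟩ := h 0 le_rfl
    exact ⟨δ, hδ, fun k hk y hy => by
      have : k = 0 := Nat.le_zero.mp hk
      subst this; exact hQ y hy⟩
  | succ m ih =>
    intro h
    obtain ⟨δ1, hδ1, h1⟩ := ih (fun k hk => h k (hk.trans (Nat.le_succ m)))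
    obtain ⟨δ2, hδ2, h2⟩ := h (m + 1) le_rfl
    refine ⟨min δ1 δ2, lt_min hδ1 hδ2, fun k hk y hy => ?_⟩
    by_cases hkm : k = m + 1
    · subst hkm; exact h2 y (hy.trans_le (min_le_right _ _))
    · exact h1 k (by omega) y (hy.trans_le (min_le_left _ _))

/-- Local linear estimate from the derivative at a fixed point. -/
private lemma aux_perk {ψ : ℝ → ℝ} {xs p : ℝ} (hp : 0 ≤ p) (hfix : ψ xs = xs)
    (hd : HasDerivAt ψ p xs) {ε : ℝ} (hε : 0 < ε) :
    ∃ δ > 0, ∀ y : ℝ, |y - xs| < δ → |ψ y - xs| ≤ (p + ε) * |y - xs| := by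
  have h := (hasDerivAt_iff_isLittleO.mp hd).def hε
  rw [Metric.eventually_nhds_iff] at h
  obtain ⟨δ, hδ, hδ'⟩ := h
  refine ⟨δ, hδ, fun y hy => ?_⟩
  have h1 := hδ' (show dist y xs < δ by rwa [Real.dist_eq])
  simp only [Real.norm_eq_abs, smul_eq_mul, hfix] at h1
  calc |ψ y - xs| = |(ψ y - xs - (y - xs) * p) + (y - xs) * p| := by ring_nf
    _ ≤ |ψ y - xs - (y - xs) * p| + |(y - xs) * p| := abs_add_le _ _
    _ ≤ ε * |y - xs| + |y - xs| * p := by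
        refine add_le_add h1 (le_of_eq ?_)
        rw [abs_mul, abs_of_nonneg hp]
    _ = (p + ε) * |y - xs| := by ring

theorem stmt14 (f : ℝ → ℝ) (hf : ContDiff ℝ 3 f) (R : ℝ) (hR : 0 < R) (N : ℕ)
    (g : ℕ → ℝ → ℝ)
    (hgN : ∀ x : ℝ, g N x = deriv f x / (R + deriv (deriv f) x))
    (hrec : ∀ l < N, ∀ x : ℝ,
      g l x = (deriv f x + R * g (l + 1) x) / (R + deriv (deriv f) x))
    (xs : ℝ) (hxs : deriv f xs = 0) (hf2 : 0 < deriv (deriv f) xs) :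
    ∀ ε > 0, ∃ δ > 0, ∀ x : ℕ → ℝ,
      (∀ k : ℕ, x (k + 1) = x k - g k (x k)) →
      ∀ k ≤ N, (∀ i ≤ k, |x i - xs| < δ) →
        |x (k + 1) - xs| ≤ (deriv (fun y => y - g k y) xs + ε) * |x k - xs| ∧
        |x (k + 1) - xs| ≤
          (∏ i ∈ range (k + 1), (deriv (fun y => y - g i y) xs + ε)) *
            |x 0 - xs| := by
  intro ε hε
  -- smoothness facts
  have hf3 : ContDiff ℝ ((2:ℕ)+1) f := by exact_mod_cast hf
  have hf1 : ContDiff ℝ 2 (deriv f) := by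
    exact_mod_cast (contDiff_succ_iff_deriv.mp hf3).2.2
  have hf1' : ContDiff ℝ ((1:ℕ)+1) (deriv f) := by exact_mod_cast hf1
  have hf2c : ContDiff ℝ 1 (deriv (deriv f)) := by
    exact_mod_cast (contDiff_succ_iff_deriv.mp hf1').2.2
  have hd1 : HasDerivAt (deriv f) (deriv (deriv f) xs) xs :=
    ((hf1.differentiable (by norm_num)) xs).hasDerivAt
  have hd2 : HasDerivAt (deriv (deriv f)) (deriv (deriv (deriv f)) xs) xs :=
    ((hf2c.differentiable (by norm_num)) xs).hasDerivAt
  set A := deriv (deriv f) xs with hA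
  set B := deriv (deriv (deriv f)) xs with hB
  set c := R + A with hcdef
  have hc : 0 < c := by positivity
  have hcne : c ≠ 0 := ne_of_gt hc
  -- key downward induction
  have key : ∀ m l : ℕ, l + m = N → g l xs = 0 ∧ ∃ D, D ≤ 1 ∧ HasDerivAt (g l) D xs := by
    intro m
    induction m with
    | zero =>
      intro l hl
      have hlN : l = N := by omega
      have hfun : g l = fun x => deriv f x / (R + deriv (deriv f) x) := by
        rw [hlN]; exact funext hgN
      have hden : HasDerivAt (fun x => R + deriv (deriv f) x) B xs :=
        by have h := (hasDerivAt_const xs R).add hd2; rwa [zero_add] at h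
      have hdiv := hd1.div hden hcne
      refine ⟨by rw [hlN, hgN, hxs, zero_div], A / c, ?_, ?_⟩
      · rw [div_le_one hc]; linarith
      · rw [hfun]
        refine hdiv.congr_deriv ?_
        rw [hxs]
        rw [← hA, ← hcdef]
        field_simp
        ring
    | succ m ih =>
      intro l hl
      have hlN : l < N := by omega
      obtain ⟨h0, D', hD', hder⟩ := ih (l + 1) (by omega)
      have hfun : g l = fun x => (deriv f x + R * g (l + 1) x) / (R + deriv (deriv f) x) :=
        funext (hrec l hlN)
      have hnum : HasDerivAt (fun x => deriv f x + R * g (l + 1) x) (A + R * D') xs :=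
        hd1.add (hder.const_mul R)
      have hden : HasDerivAt (fun x => R + deriv (deriv f) x) B xs :=
        by have h := (hasDerivAt_const xs R).add hd2; rwa [zero_add] at h
      have hdiv := hnum.div hden hcne
      refine ⟨by rw [hrec l hlN, hxs, h0]; simp, (A + R * D') / c, ?_, ?_⟩
      · rw [div_le_one hc]; nlinarith
      · rw [hfun]
        refine hdiv.congr_deriv ?_
        rw [hxs, h0]
        rw [← hA, ← hcdef]
        field_simp
        ring
  -- properties of ψ_k
  have hψ : ∀ k ≤ N, 0 ≤ deriv (fun y => y - g k y) xs ∧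
      HasDerivAt (fun y => y - g k y) (deriv (fun y => y - g k y) xs) xs ∧
      (fun y => y - g k y) xs = xs := by
    intro k hk
    obtain ⟨h0, D, hD1, hder⟩ := key (N - k) k (by omega)
    have hψd : HasDerivAt (fun y => y - g k y) (1 - D) xs := (hasDerivAt_id xs).sub hder
    have hde : deriv (fun y => y - g k y) xs = 1 - D := hψd.deriv
    refine ⟨by rw [hde]; linarith, by rw [hde]; exact hψd, by simp [h0]⟩
  -- uniform δ
  have H : ∀ k ≤ N, ∃ δ > 0, ∀ y : ℝ, |y - xs| < δ →
      |y - g k y - xs| ≤ (deriv (fun y => y - g k y) xs + ε) * |y - xs| := by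
    intro k hk
    obtain ⟨hp, hder, hfix⟩ := hψ k hk
    exact aux_perk (ψ := fun t => t - g k t) hp hfix hder hε
  obtain ⟨δ, hδ, hQ⟩ := aux_uniform_delta
    (fun k y => |y - g k y - xs| ≤ (deriv (fun t => t - g k t) xs + ε) * |y - xs|) N H
  refine ⟨δ, hδ, ?_⟩
  intro x hx k hkN hclose
  have step : ∀ j ≤ N, |x j - xs| < δ →
      |x (j + 1) - xs| ≤ (deriv (fun y => y - g j y) xs + ε) * |x j - xs| := by
    intro j hj hjc
    rw [hx j]
    exact hQ j hj (x j) hjc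
  refine ⟨step k hkN (hclose k le_rfl), ?_⟩
  clear hQ
  induction k with
  | zero =>
    rw [Finset.prod_range_one]
    exact step 0 hkN (hclose 0 le_rfl)
  | succ k ih =>
    have h1 := step (k + 1) hkN (hclose (k + 1) le_rfl)
    have h2 := ih (by omega) (fun i hi => hclose i (by omega))
    have hnn : 0 ≤ deriv (fun y => y - g (k + 1) y) xs + ε :=
      add_nonneg (hψ (k + 1) hkN).1 hε.le
    calc |x (k + 1 + 1) - xs|
        ≤ (deriv (fun y => y - g (k + 1) y) xs + ε) * |x (k + 1) - xs| := h1
      _ ≤ (deriv (fun y => y - g (k + 1) y) xs + ε) *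
          ((∏ i ∈ range (k + 1), (deriv (fun y => y - g i y) xs + ε)) * |x 0 - xs|) :=
          mul_le_mul_of_nonneg_left h2 hnn
      _ = (∏ i ∈ range (k + 1 + 1), (deriv (fun y => y - g i y) xs + ε)) * |x 0 - xs| := by
          conv_rhs => rw [Finset.prod_range_succ]
          ring
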